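/- Assume E(|u|²) < ∞ μ-a.e., set S = {x : E(|u|²)(x) > 0} and ũ = u·E(|u|²)^{-1/2}·χ_S. For every f ∈ D(EM_u), the function h := ū·E(|u|²)^{-1/2}·χ_S·(EM_u f) belongs to L²(μ) with ∫_X |h|² dμ = ∫_X |EM_u f|² dμ, h belongs to D(EM_{ũ}), and EM_{ũ} h = EM_u f μ-a.e. (This is the identity U(|EM_u| f) = EM_u f for the partial isometry U = EM_{ũ} in the polar decomposition of EM_u.) -/

import Mathlib

open MeasureTheory Filter ENNReal NNReal

noncomputable section

variable {X : Type*}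

/-- A set `A` in the sub-σ-algebra `m` is *admissible* for the weight `u` if
`μ A + ∫_A |u|² dμ < ∞`. -/
def Admissible (m : MeasurableSpace X) [m0 : MeasurableSpace X] (μ : Measure X)
    (u : X → ℂ) (A : Set X) : Prop :=
  MeasurableSet[m] A ∧ μ A + ∫⁻ x in A, (‖u x‖₊ : ℝ≥0∞) ^ 2 ∂μ < ⊤

/-- `gf` is a version of `E(u·f)`, i.e. `gf` is an `m`-measurable function in `L²(μ)` with
`∫_A u·f dμ = ∫_A gf dμ` for every admissible `A`.  `f ∈ D(EM_u)` iff `f ∈ L²(μ)` and such a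
`gf` exists. -/
def IsWCE (m : MeasurableSpace X) [m0 : MeasurableSpace X] (μ : Measure X)
    (u f gf : X → ℂ) : Prop :=
  StronglyMeasurable[m] gf ∧ MemLp gf 2 μ ∧
    ∀ A : Set X, Admissible m μ u A → ∫ x in A, u x * f x ∂μ = ∫ x in A, gf x ∂μ

/-- With `E(|u|²) < ∞` a.e., `S = {E(|u|²) > 0}` and
`ũ = u·E(|u|²)^{-1/2}·χ_S`, for every `f ∈ D(EM_u)` the function
`h = ū·E(|u|²)^{-1/2}·χ_S·(EM_u f)` is in `L²(μ)` with `∫|h|² = ∫|EM_u f|²`, `h ∈ D(EM_ũ)`,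
and `EM_ũ h = EM_u f` a.e. -/
theorem stmt10 (m : MeasurableSpace X) [m0 : MeasurableSpace X] (hm : m ≤ m0)
    (μ : Measure X) [SigmaFinite μ] [SigmaFinite (μ.trim hm)]
    (u : X → ℂ) (hu : Measurable u)
    (g : X → ℝ≥0∞) (hgm : Measurable[m] g)
    (hg : ∀ A : Set X, MeasurableSet[m] A →
      ∫⁻ x in A, (‖u x‖₊ : ℝ≥0∞) ^ 2 ∂μ = ∫⁻ x in A, g x ∂μ)
    (hgfin : ∀ᵐ x ∂μ, g x < ⊤)
    (f gf : X → ℂ) (hf : MemLp f 2 μ) (hgf : IsWCE m μ u f gf) :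
    letI S : Set X := {x | 0 < g x}
    letI utilde : X → ℂ := S.indicator fun x => u x * (Real.sqrt ((g x).toReal) : ℂ)⁻¹
    letI h : X → ℂ :=
      S.indicator fun x => (starRingEnd ℂ) (u x) * (Real.sqrt ((g x).toReal) : ℂ)⁻¹ * gf x
    MemLp h 2 μ ∧
    (∫⁻ x, (‖h x‖₊ : ℝ≥0∞) ^ 2 ∂μ = ∫⁻ x, (‖gf x‖₊ : ℝ≥0∞) ^ 2 ∂μ) ∧
    ∃ k : X → ℂ, IsWCE m μ utilde h k ∧ k =ᵐ[μ] gf := by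
  set S : Set X := {x | 0 < g x} with hSdef
  set utilde : X → ℂ := S.indicator fun x => u x * (Real.sqrt ((g x).toReal) : ℂ)⁻¹
    with hudef
  set hh : X → ℂ :=
    S.indicator fun x => (starRingEnd ℂ) (u x) * (Real.sqrt ((g x).toReal) : ℂ)⁻¹ * gf x
    with hhdef
  have hgm0 : Measurable g := hgm.mono hm le_rfl
  have hSm : MeasurableSet[m] S := hgm measurableSet_Ioi
  have hS0 : MeasurableSet S := hm _ hSm
  have hgfsm : StronglyMeasurable[m] gf := hgf.1
  have hgfm : Measurable gf := (hgfsm.mono hm).measurable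
  have hgfmm : Measurable[m] gf := hgfsm.measurable
  -- the two densities
  set w : X → ℝ≥0 := fun x => ‖u x‖₊ ^ 2 with hw
  have hwm : Measurable w := hu.nnnorm.pow_const 2
  set g' : X → ℝ≥0 := fun x => (g x).toNNReal with hg'
  have hg'm : Measurable[m] g' := hgm.ennreal_toNNReal
  have hg'm0 : Measurable g' := hg'm.mono hm le_rfl
  have hg'ae : (fun x => (g' x : ℝ≥0∞)) =ᵐ[μ] g := by
    filter_upwards [hgfin] with x hx
    exact ENNReal.coe_toNNReal hx.ne
  have hwcoe : ∀ x, ((w x : ℝ≥0∞)) = (‖u x‖₊ : ℝ≥0∞) ^ 2 := fun x => by push_cast; rfl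
  -- the trimmed `withDensity` measures agree
  have hν : (μ.withDensity fun x => (w x : ℝ≥0∞)).trim hm
      = (μ.withDensity fun x => (g' x : ℝ≥0∞)).trim hm := by
    refine @Measure.ext _ m _ _ fun s hs => ?_
    rw [trim_measurableSet_eq hm hs, trim_measurableSet_eq hm hs,
      withDensity_apply _ (hm s hs), withDensity_apply _ (hm s hs)]
    calc ∫⁻ x in s, (w x : ℝ≥0∞) ∂μ = ∫⁻ x in s, (‖u x‖₊ : ℝ≥0∞) ^ 2 ∂μ := by
          exact lintegral_congr fun x => hwcoe x
      _ = ∫⁻ x in s, g x ∂μ := hg s hs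
      _ = ∫⁻ x in s, (g' x : ℝ≥0∞) ∂μ :=
          lintegral_congr_ae (ae_restrict_of_ae hg'ae.symm)
  -- transfer of lower integrals
  have L1 : ∀ φ : X → ℝ≥0∞, Measurable[m] φ →
      ∫⁻ x, (w x : ℝ≥0∞) * φ x ∂μ = ∫⁻ x, (g' x : ℝ≥0∞) * φ x ∂μ := by
    intro φ hφ
    have hφ0 : Measurable φ := hφ.mono hm le_rfl
    calc ∫⁻ x, (w x : ℝ≥0∞) * φ x ∂μ
        = ∫⁻ x, φ x ∂(μ.withDensity fun x => (w x : ℝ≥0∞)) :=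
          (lintegral_withDensity_eq_lintegral_mul μ hwm.coe_nnreal_ennreal hφ0).symm
      _ = ∫⁻ x, φ x ∂((μ.withDensity fun x => (w x : ℝ≥0∞)).trim hm) :=
          (lintegral_trim hm hφ).symm
      _ = ∫⁻ x, φ x ∂((μ.withDensity fun x => (g' x : ℝ≥0∞)).trim hm) := by rw [hν]
      _ = ∫⁻ x, φ x ∂(μ.withDensity fun x => (g' x : ℝ≥0∞)) := lintegral_trim hm hφ
      _ = ∫⁻ x, (g' x : ℝ≥0∞) * φ x ∂μ :=
          lintegral_withDensity_eq_lintegral_mul μ hg'm0.coe_nnreal_ennreal hφ0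
  -- transfer of Bochner integrals
  have L2 : ∀ F : X → ℂ, StronglyMeasurable[m] F →
      ∫ x, w x • F x ∂μ = ∫ x, g' x • F x ∂μ := by
    intro F hF
    calc ∫ x, w x • F x ∂μ
        = ∫ x, F x ∂(μ.withDensity fun x => (w x : ℝ≥0∞)) :=
          (integral_withDensity_eq_integral_smul hwm F).symm
      _ = ∫ x, F x ∂((μ.withDensity fun x => (w x : ℝ≥0∞)).trim hm) := integral_trim hm hF
      _ = ∫ x, F x ∂((μ.withDensity fun x => (g' x : ℝ≥0∞)).trim hm) := by rw [hν]
      _ = ∫ x, F x ∂(μ.withDensity fun x => (g' x : ℝ≥0∞)) := (integral_trim hm hF).symm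
      _ = ∫ x, g' x • F x ∂μ := integral_withDensity_eq_integral_smul hg'm0 F
  -- `gf` vanishes a.e. off `S`
  have hAzero : ∀ A : Set X, MeasurableSet[m] A → A ⊆ Sᶜ → μ A < ⊤ →
      ∫ x in A, gf x ∂μ = 0 := by
    intro A hA hAS hAfin
    have hgA : ∫⁻ x in A, g x ∂μ = 0 := by
      have hA0 : ∀ᵐ x ∂μ, x ∈ A → g x = (fun _ => (0 : ℝ≥0∞)) x :=
        Filter.Eventually.of_forall (fun x hx => by
          have h2 : ¬ 0 < g x := hAS hx
          simpa using h2)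
      rw [setLIntegral_congr_fun_ae (hm A hA) hA0, lintegral_zero]
    have huA : ∫⁻ x in A, (‖u x‖₊ : ℝ≥0∞) ^ 2 ∂μ = 0 := by rw [hg A hA, hgA]
    have hadm : Admissible m μ u A := ⟨hA, by rw [huA]; simpa using hAfin⟩
    have hu0 : ∀ᵐ x ∂(μ.restrict A), u x = 0 := by
      have hmeas : Measurable fun x => (‖u x‖₊ : ℝ≥0∞) ^ 2 :=
        hu.nnnorm.coe_nnreal_ennreal.pow_const 2
      filter_upwards [(lintegral_eq_zero_iff hmeas).mp huA] with x hx
      simpa using hx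
    have huf : ∫ x in A, u x * f x ∂μ = 0 := by
      refine integral_eq_zero_of_ae ?_
      filter_upwards [hu0] with x hx
      simp [hx]
    rw [← hgf.2.2 A hadm, huf]
  have hSc : ∀ᵐ x ∂μ, x ∉ S → gf x = 0 := by
    have hmeasI : StronglyMeasurable[m] (Sᶜ.indicator gf) := hgfsm.indicator hSm.compl
    have hintf : ∀ s : Set X, MeasurableSet[m] s → μ s < ⊤ →
        IntegrableOn (Sᶜ.indicator gf) s μ := by
      intro s hs hsfin
      haveI : IsFiniteMeasure (μ.restrict s) := ⟨by rwa [Measure.restrict_apply_univ]⟩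
      exact ((hgf.2.1.restrict s).integrable one_le_two).indicator (hm _ hSm.compl)
    have hzero : ∀ s : Set X, MeasurableSet[m] s → μ s < ⊤ →
        ∫ x in s, Sᶜ.indicator gf x ∂μ = ∫ x in s, (0 : X → ℂ) x ∂μ := by
      intro s hs hsfin
      rw [setIntegral_indicator (hm _ hSm.compl)]
      simp only [Pi.zero_apply, integral_zero]
      exact hAzero (s ∩ Sᶜ) (hs.inter hSm.compl) Set.inter_subset_right
        (lt_of_le_of_lt (measure_mono Set.inter_subset_left) hsfin)
    have key : Sᶜ.indicator gf =ᵐ[μ] (0 : X → ℂ) :=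
      ae_eq_of_forall_setIntegral_eq_of_sigmaFinite' hm hintf
        (fun s hs hsfin => (integrable_zero _ _ _).integrableOn) hzero
        ⟨Sᶜ.indicator gf, hmeasI, Filter.EventuallyEq.rfl⟩
        ⟨fun _ => 0, stronglyMeasurable_const, Filter.EventuallyEq.rfl⟩
    filter_upwards [key] with x hx hxS
    have hxc : x ∈ Sᶜ := hxS
    rw [Set.indicator_of_mem hxc] at hx
    simpa using hx
  -- the auxiliary nonnegative function φ
  set φ : X → ℝ≥0∞ := S.indicator fun x => (g x)⁻¹ * (‖gf x‖₊ : ℝ≥0∞) ^ 2 with hφdef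
  have hφm : Measurable[m] φ := by
    have h1 : Measurable[m] fun x => (g x)⁻¹ := measurable_inv.comp hgm
    have h2 : Measurable[m] fun x => (‖gf x‖₊ : ℝ≥0∞) :=
      measurable_enorm.comp hgfmm
    exact (h1.mul (h2.pow_const 2)).indicator hSm
  -- Step A : |hh|² = w·φ a.e.
  have stepA : (fun x => (‖hh x‖₊ : ℝ≥0∞) ^ 2) =ᵐ[μ] fun x => (w x : ℝ≥0∞) * φ x := by
    filter_upwards [hgfin] with x hx
    by_cases hxS : x ∈ S
    · have hgpos : 0 < g x := hxS
      have htpos : 0 < (g x).toReal := ENNReal.toReal_pos hgpos.ne' hx.ne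
      have h1 : ((‖Real.sqrt ((g x).toReal)‖₊ : ℝ≥0∞)) = ENNReal.ofReal
          (Real.sqrt ((g x).toReal)) := by
        rw [Real.nnnorm_of_nonneg (Real.sqrt_nonneg _),
          ← ENNReal.ofReal_eq_coe_nnreal]
      have hsq : ((‖Real.sqrt ((g x).toReal)‖₊ : ℝ≥0∞)) ^ 2 = g x := by
        rw [h1, ← ENNReal.ofReal_pow (Real.sqrt_nonneg _), Real.sq_sqrt htpos.le,
          ENNReal.ofReal_toReal hx.ne]
      have hsnz : ‖Real.sqrt ((g x).toReal)‖₊ ≠ 0 := by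
        simpa using (Real.sqrt_pos.mpr htpos).ne'
      calc ((‖hh x‖₊ : ℝ≥0∞)) ^ 2
          = (‖u x‖₊ : ℝ≥0∞) ^ 2 * (((‖Real.sqrt ((g x).toReal)‖₊ : ℝ≥0∞)) ^ 2)⁻¹
            * (‖gf x‖₊ : ℝ≥0∞) ^ 2 := by
            show ((‖(S.indicator _ x : ℂ)‖₊ : ℝ≥0∞)) ^ 2 = _
            rw [Set.indicator_of_mem hxS, nnnorm_mul, nnnorm_mul, nnnorm_inv,
              Complex.nnnorm_real, RCLike.nnnorm_conj, ENNReal.inv_pow]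
            push_cast [ENNReal.coe_inv hsnz]
            ring
        _ = (w x : ℝ≥0∞) * φ x := by
            rw [hsq, hφdef, Set.indicator_of_mem hxS, hwcoe]
            ring
    · have : hh x = 0 := Set.indicator_of_notMem hxS _
      rw [hφdef]
      simp [this, Set.indicator_of_notMem hxS]
  -- Step C : g·φ = |gf|² a.e.
  have stepC : (fun x => g x * φ x) =ᵐ[μ] fun x => (‖gf x‖₊ : ℝ≥0∞) ^ 2 := by
    filter_upwards [hgfin, hSc] with x hx hx0
    by_cases hxS : x ∈ S
    · rw [hφdef]
      simp only [Set.indicator_of_mem hxS]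
      rw [← mul_assoc, ENNReal.mul_inv_cancel (hxS : 0 < g x).ne' hx.ne, one_mul]
    · rw [hφdef]
      simp [Set.indicator_of_notMem hxS, hx0 hxS]
  -- the lintegral identity
  have hint2 : ∫⁻ x, (‖hh x‖₊ : ℝ≥0∞) ^ 2 ∂μ = ∫⁻ x, (‖gf x‖₊ : ℝ≥0∞) ^ 2 ∂μ := by
    calc ∫⁻ x, (‖hh x‖₊ : ℝ≥0∞) ^ 2 ∂μ
        = ∫⁻ x, (w x : ℝ≥0∞) * φ x ∂μ := lintegral_congr_ae stepA
      _ = ∫⁻ x, (g' x : ℝ≥0∞) * φ x ∂μ := L1 φ hφm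
      _ = ∫⁻ x, g x * φ x ∂μ := lintegral_congr_ae (by
            filter_upwards [hg'ae] with x hx; rw [hx])
      _ = ∫⁻ x, (‖gf x‖₊ : ℝ≥0∞) ^ 2 ∂μ := lintegral_congr_ae stepC
  -- measurability of hh
  have hconj : Measurable fun x => (starRingEnd ℂ) (u x) := by
    simpa only [starRingEnd_apply, Function.comp_def] using (continuous_star.measurable.comp hu :
      Measurable fun x => star (u x))
  have hsi : Measurable fun x => ((Real.sqrt ((g x).toReal) : ℝ) : ℂ)⁻¹ :=
    (Complex.measurable_ofReal.comp
      (Real.continuous_sqrt.measurable.comp hgm0.ennreal_toReal)).inv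
  have hhmeas : Measurable hh := ((hconj.mul hsi).mul hgfm).indicator hS0
  have hpow : ∀ F : X → ℂ, ∫⁻ x, (‖F x‖₊ : ℝ≥0∞) ^ ((2 : ℝ≥0∞).toReal) ∂μ
      = ∫⁻ x, (‖F x‖₊ : ℝ≥0∞) ^ 2 ∂μ := by
    intro F
    refine lintegral_congr fun x => ?_
    rw [ENNReal.toReal_ofNat, ← ENNReal.rpow_natCast]
    norm_num
  have hgf2 : ∫⁻ x, (‖gf x‖₊ : ℝ≥0∞) ^ 2 ∂μ < ⊤ := by
    rw [← hpow]
    exact lintegral_rpow_enorm_lt_top_of_eLpNorm_lt_top two_ne_zero ENNReal.ofNat_ne_top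
      hgf.2.1.2
  have hmemhh : MemLp hh 2 μ := by
    refine ⟨hhmeas.aestronglyMeasurable, ?_⟩
    rw [eLpNorm_lt_top_iff_lintegral_rpow_enorm_lt_top two_ne_zero ENNReal.ofNat_ne_top]
    simp only [enorm_eq_nnnorm]
    rw [hpow, hint2]
    exact hgf2
  refine ⟨hmemhh, hint2, gf, ⟨hgf.1, hgf.2.1, ?_⟩, Filter.EventuallyEq.rfl⟩
  -- the conditional expectation identity
  intro A hA
  set ψ : X → ℂ := S.indicator fun x => (((g x).toReal : ℝ) : ℂ)⁻¹ * gf x with hψdef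
  have hψm : StronglyMeasurable[m] ψ := by
    refine Measurable.stronglyMeasurable ?_
    exact (((Complex.measurable_ofReal.comp hgm.ennreal_toReal).inv.mul hgfmm).indicator hSm)
  have P1 : ∀ x, A.indicator (fun x => utilde x * hh x) x = w x • (A.indicator ψ) x := by
    intro x
    by_cases hxA : x ∈ A
    · rw [Set.indicator_of_mem hxA, Set.indicator_of_mem hxA]
      by_cases hxS : x ∈ S
      · have hgpos : 0 < g x := hxS
        have ht0 : (0:ℝ) ≤ (g x).toReal := ENNReal.toReal_nonneg
        have hul : utilde x = u x * ((Real.sqrt ((g x).toReal) : ℝ) : ℂ)⁻¹ :=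
          Set.indicator_of_mem hxS _
        have hhl : hh x = (starRingEnd ℂ) (u x)
            * ((Real.sqrt ((g x).toReal) : ℝ) : ℂ)⁻¹ * gf x :=
          Set.indicator_of_mem hxS _
        have hψl : ψ x = (((g x).toReal : ℝ) : ℂ)⁻¹ * gf x := Set.indicator_of_mem hxS _
        have h1 : ((Real.sqrt ((g x).toReal) : ℝ) : ℂ)⁻¹
            * ((Real.sqrt ((g x).toReal) : ℝ) : ℂ)⁻¹ = (((g x).toReal : ℝ) : ℂ)⁻¹ := by
          rw [← mul_inv, ← Complex.ofReal_mul, Real.mul_self_sqrt ht0]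
        have h2 : u x * (starRingEnd ℂ) (u x) = ((‖u x‖ ^ 2 : ℝ) : ℂ) := by
          rw [Complex.mul_conj, Complex.normSq_eq_norm_sq]
        have h3 : ((w x : ℝ) : ℂ) = ((‖u x‖ ^ 2 : ℝ) : ℂ) := by
          rw [hw]; push_cast; rfl
        rw [hul, hhl, hψl, NNReal.smul_def, Complex.real_smul, h3]
        calc u x * ((Real.sqrt ((g x).toReal) : ℝ) : ℂ)⁻¹
              * ((starRingEnd ℂ) (u x) * ((Real.sqrt ((g x).toReal) : ℝ) : ℂ)⁻¹ * gf x)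
            = u x * (starRingEnd ℂ) (u x)
              * (((Real.sqrt ((g x).toReal) : ℝ) : ℂ)⁻¹
                * ((Real.sqrt ((g x).toReal) : ℝ) : ℂ)⁻¹) * gf x := by ring
          _ = ((‖u x‖ ^ 2 : ℝ) : ℂ) * ((((g x).toReal : ℝ) : ℂ)⁻¹ * gf x) := by
              rw [h1, h2]; ring
      · have h4 : utilde x = 0 := Set.indicator_of_notMem hxS _
        have h5 : ψ x = 0 := Set.indicator_of_notMem hxS _
        rw [h4, h5, zero_mul, smul_zero]
    · rw [Set.indicator_of_notMem hxA, Set.indicator_of_notMem hxA, smul_zero]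
  have P2 : (fun x => g' x • (A.indicator ψ) x) =ᵐ[μ] fun x => A.indicator gf x := by
    filter_upwards [hgfin, hSc] with x hx hx0
    by_cases hxA : x ∈ A
    · rw [Set.indicator_of_mem hxA, Set.indicator_of_mem hxA]
      by_cases hxS : x ∈ S
      · have htpos : 0 < (g x).toReal := ENNReal.toReal_pos (hxS : 0 < g x).ne' hx.ne
        have hψl : ψ x = (((g x).toReal : ℝ) : ℂ)⁻¹ * gf x := Set.indicator_of_mem hxS _
        have hgr : ((g' x : ℝ) : ℂ) = (((g x).toReal : ℝ) : ℂ) := rfl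
        rw [hψl, NNReal.smul_def, Complex.real_smul, hgr, ← mul_assoc,
          mul_inv_cancel₀ (Complex.ofReal_ne_zero.mpr htpos.ne'), one_mul]
      · have h5 : ψ x = 0 := Set.indicator_of_notMem hxS _
        rw [h5, smul_zero, hx0 hxS]
    · rw [Set.indicator_of_notMem hxA, Set.indicator_of_notMem hxA, smul_zero]
  calc ∫ x in A, utilde x * hh x ∂μ
      = ∫ x, A.indicator (fun x => utilde x * hh x) x ∂μ :=
        (integral_indicator (hm _ hA.1)).symm
    _ = ∫ x, w x • (A.indicator ψ) x ∂μ := by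
        exact integral_congr_ae (Filter.Eventually.of_forall P1)
    _ = ∫ x, g' x • (A.indicator ψ) x ∂μ := L2 _ (hψm.indicator hA.1)
    _ = ∫ x, A.indicator gf x ∂μ := integral_congr_ae P2
    _ = ∫ x in A, gf x ∂μ := integral_indicator (hm _ hA.1)
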